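/- For θ > 0 define h(θ) = (1/4)[ψ₁(θ/2) − ψ₁((θ+1)/2)] − 1/(2θ) − (θ+2)/(2θ(θ+3)) + 1/(θ+1), where ψ₁ is the trigamma function (second derivative of log Γ). Then h(θ) = O(θ^{−4}) as θ → ∞; that is, there exist constants C > 0 and T > 0 such that h(θ) ≤ C θ^{−4} for all θ ≥ T. -/

import Mathlib

open MeasureTheory

/-- The trigamma function `ψ₁ = (log Γ)''`. -/
noncomputable def trigamma (x : ℝ) : ℝ :=
  deriv (deriv fun t => Real.log (Real.Gamma t)) x

/-- The Fisher information about the degrees of freedom `θ` of the standard Student-t model,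
`h(θ) = (1/4)[ψ₁(θ/2) − ψ₁((θ+1)/2)] − 1/(2θ) − (θ+2)/(2θ(θ+3)) + 1/(θ+1)`. -/
noncomputable def studentTFisher (θ : ℝ) : ℝ :=
  (1 / 4) * (trigamma (θ / 2) - trigamma ((θ + 1) / 2))
    - 1 / (2 * θ) - (θ + 2) / (2 * θ * (θ + 3)) + 1 / (θ + 1)

open Real Set Filter Topology

namespace StudentTAux

lemma contDiffAt_RGamma {x : ℝ} (hx : 0 < x) (n : ℕ∞) : ContDiffAt ℝ n Real.Gamma x := by
  have hs : IsOpen {z : ℂ | 0 < z.re} := isOpen_lt continuous_const Complex.continuous_re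
  have hd : DifferentiableOn ℂ Complex.Gamma {z : ℂ | 0 < z.re} := by
    intro z hz
    refine (Complex.differentiableAt_Gamma z fun m => ?_).differentiableWithinAt
    intro h
    have h2 : (0:ℝ) < (z:ℂ).re := hz
    rw [h] at h2
    simp only [Complex.neg_re, Complex.natCast_re] at h2
    have : (0:ℝ) ≤ (m:ℝ) := Nat.cast_nonneg m
    linarith
  have ha : AnalyticAt ℂ Complex.Gamma (x : ℂ) :=
    hd.analyticAt (hs.mem_nhds (by simpa using hx))
  have h2 : AnalyticAt ℝ (fun t : ℝ => (Complex.Gamma (t : ℂ)).re) x :=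
    (Complex.reCLM.analyticAt _).comp ((ha.restrictScalars).comp (Complex.ofRealCLM.analyticAt x))
  have h3 : (fun t : ℝ => (Complex.Gamma (t : ℂ)).re) = Real.Gamma := by
    funext t
    rw [Complex.Gamma_ofReal, Complex.ofReal_re]
  rw [h3] at h2
  exact h2.contDiffAt.of_le le_top

noncomputable def lG : ℝ → ℝ := fun t => Real.log (Real.Gamma t)
noncomputable def dG : ℝ → ℝ := deriv lG

lemma contDiffAt_lG {x : ℝ} (hx : 0 < x) (n : ℕ∞) : ContDiffAt ℝ n lG x :=
  (contDiffAt_RGamma hx n).log (Real.Gamma_pos_of_pos hx).ne'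

lemma contDiffOn_lG : ContDiffOn ℝ 2 lG (Ioi 0) :=
  fun _ hy => (contDiffAt_lG hy 2).contDiffWithinAt

lemma contDiffOn_dG : ContDiffOn ℝ 1 dG (Ioi 0) :=
  contDiffOn_lG.deriv_of_isOpen isOpen_Ioi (by norm_num)

lemma contOn_tri' : ContinuousOn (deriv dG) (Ioi 0) :=
  contDiffOn_dG.continuousOn_deriv_of_isOpen isOpen_Ioi le_rfl

lemma diff_lG {x : ℝ} (hx : 0 < x) : DifferentiableAt ℝ lG x :=
  (contDiffAt_lG hx 1).differentiableAt (by simp)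


lemma diff_dG {x : ℝ} (hx : 0 < x) : DifferentiableAt ℝ dG x :=
  ((contDiffOn_dG.differentiableOn (by simp)).differentiableAt (isOpen_Ioi.mem_nhds hx))

lemma lG_rec {x : ℝ} (hx : 0 < x) : lG (x + 1) = lG x + Real.log x := by
  simp only [lG]
  rw [Real.Gamma_add_one hx.ne', Real.log_mul hx.ne' (Real.Gamma_pos_of_pos hx).ne']
  ring

lemma dG_rec {x : ℝ} (hx : 0 < x) : dG (x + 1) = dG x + x⁻¹ := by
  have hev : (fun y => lG (y + 1)) =ᶠ[𝓝 x] fun y => lG y + Real.log y := by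
    filter_upwards [eventually_gt_nhds hx] with y hy using lG_rec hy
  have h1 : deriv (fun y => lG (y + 1)) x = dG (x + 1) := deriv_comp_add_const lG 1 x
  rw [← h1, hev.deriv_eq, deriv_fun_add (diff_lG hx) (Real.differentiableAt_log hx.ne'),
    Real.deriv_log]
  rfl

lemma tri_rec {x : ℝ} (hx : 0 < x) : deriv dG (x + 1) = deriv dG x - ((x:ℝ) ^ 2)⁻¹ := by
  have hev : (fun y => dG (y + 1)) =ᶠ[𝓝 x] fun y => dG y + y⁻¹ := by
    filter_upwards [eventually_gt_nhds hx] with y hy using dG_rec hy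
  have h1 : deriv (fun y => dG (y + 1)) x = deriv dG (x + 1) := deriv_comp_add_const dG 1 x
  rw [← h1, hev.deriv_eq, deriv_fun_add (diff_dG hx) (differentiableAt_inv hx.ne'), deriv_inv]
  ring

lemma dG_mono {x y : ℝ} (hx : 0 < x) (hxy : x ≤ y) : dG x ≤ dG y := by
  rcases eq_or_lt_of_le hxy with rfl | h
  · exact le_refl _
  have hc : ConvexOn ℝ (Ioi 0) lG := by
    exact Real.convexOn_log_Gamma
  have hy : 0 < y := hx.trans h
  calc dG x ≤ slope lG x y := hc.deriv_le_slope hx hy h (diff_lG hx)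
    _ ≤ dG y := hc.slope_le_deriv hx hy h (diff_lG hy)

lemma tri_nonneg' {x : ℝ} (hx : 0 < x) : 0 ≤ deriv dG x := by
  have hd : HasDerivAt dG (deriv dG x) x := (diff_dG hx).hasDerivAt
  have ht : Tendsto (slope dG x) (𝓝[>] x) (𝓝 (deriv dG x)) :=
    (hasDerivAt_iff_tendsto_slope.mp hd).mono_left
      (nhdsWithin_mono x fun y hy => ne_of_gt hy)
  refine ge_of_tendsto ht ?_
  filter_upwards [self_mem_nhdsWithin] with y hy
  rw [slope_def_field]
  have : x < y := hy
  exact div_nonneg (sub_nonneg.mpr (dG_mono hx this.le)) (by linarith)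

lemma tri_partial' {x : ℝ} (hx : 0 < x) (N : ℕ) :
    deriv dG x = (∑ n ∈ Finset.range N, ((x + n) ^ 2)⁻¹) + deriv dG (x + N) := by
  induction N with
  | zero => simp
  | succ N ih =>
    have hxN : 0 < x + N := by positivity
    have : deriv dG (x + (N + 1 : ℕ)) = deriv dG (x + N) - ((x + N) ^ 2)⁻¹ := by
      have := tri_rec hxN
      rw [show x + (N + 1 : ℕ) = (x + N) + 1 by push_cast; ring, this]
    rw [this, Finset.sum_range_succ, ih]
    ring

lemma integral_tri' {x : ℝ} (hx : 0 < x) : ∫ t in x..(x + 1), deriv dG t = x⁻¹ := by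
  have hsub : uIcc x (x + 1) ⊆ Ioi 0 := by
    rw [uIcc_of_le (by linarith)]
    intro t ht
    exact lt_of_lt_of_le hx ht.1
  have h := intervalIntegral.integral_eq_sub_of_hasDerivAt
    (f := dG) (f' := deriv dG) (a := x) (b := x + 1)
    (fun t ht => (diff_dG (hsub ht)).hasDerivAt)
    ((contOn_tri'.mono hsub).intervalIntegrable)
  rw [h, dG_rec hx]
  ring


noncomputable def tri : ℝ → ℝ := deriv dG

lemma tri_nonneg {x : ℝ} (hx : 0 < x) : 0 ≤ tri x := tri_nonneg' hx

lemma tri_partial {x : ℝ} (hx : 0 < x) (N : ℕ) :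
    tri x = (∑ n ∈ Finset.range N, ((x + n) ^ 2)⁻¹) + tri (x + N) := tri_partial' hx N

lemma contOn_tri : ContinuousOn tri (Ioi 0) := contOn_tri'

lemma integral_tri {x : ℝ} (hx : 0 < x) : ∫ t in x..(x + 1), tri t = x⁻¹ := integral_tri' hx

lemma trigamma_eq_tri : trigamma = tri := rfl

noncomputable def S (x : ℝ) : ℝ := ∑' n : ℕ, ((x + n) ^ 2)⁻¹

lemma summable_S {x : ℝ} (hx : 0 < x) : Summable fun n : ℕ => ((x + n) ^ 2)⁻¹ := by
  have base : Summable fun n : ℕ => (((n : ℝ) + 1) ^ 2)⁻¹ := by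
    have h1 : Summable fun n : ℕ => ((n : ℝ) ^ 2)⁻¹ := by
      simpa using Real.summable_one_div_nat_pow.mpr one_lt_two
    exact_mod_cast (summable_nat_add_iff 1).mpr h1
  refine (summable_nat_add_iff 1).mp (base.of_nonneg_of_le (fun n => by positivity) fun n => ?_)
  have h1 : (0:ℝ) < (n : ℝ) + 1 := by positivity
  have h2 : ((n : ℝ) + 1) ≤ x + (n + 1 : ℕ) := by push_cast; linarith
  have := inv_anti₀ (by positivity : (0:ℝ) < ((n:ℝ)+1)^2) (by nlinarith : ((n:ℝ)+1)^2 ≤ (x + (n+1:ℕ))^2)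
  exact this

lemma S_nonneg (x : ℝ) : 0 ≤ S x := tsum_nonneg fun n => by positivity

lemma S_rec {x : ℝ} (hx : 0 < x) : S x = (x ^ 2)⁻¹ + S (x + 1) := by
  rw [S, (summable_S hx).tsum_eq_zero_add]
  congr 1
  · norm_num
  · refine tsum_congr fun n => ?_
    push_cast
    ring_nf


lemma S_le_tri {x : ℝ} (hx : 0 < x) : S x ≤ tri x := by
  refine tsum_le_of_sum_range_le (fun n => by positivity) fun N => ?_
  rw [tri_partial hx N]
  have : (0:ℝ) ≤ tri (x + N) := tri_nonneg (by positivity)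
  linarith

lemma contAt_S {x : ℝ} (hx : 0 < x) : ContinuousAt S x := by
  have hcont : ContinuousOn S (Ioi (x / 2)) := by
    refine continuousOn_tsum (f := fun (n : ℕ) (y : ℝ) => ((y + n) ^ 2)⁻¹)
      (u := fun n : ℕ => ((x / 2 + n) ^ 2)⁻¹) (fun n => ?_) (summable_S (by positivity))
      (fun n y hy => ?_)
    · refine ContinuousOn.inv₀ (by fun_prop) fun y hy => ?_
      have h1 : x / 2 < y := hy
      have hn : (0:ℝ) ≤ n := n.cast_nonneg
      have hy0 : 0 < y + n := by linarith
      exact (pow_pos hy0 2).ne'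
    · have h1 : x / 2 < y := hy
      have hn : (0:ℝ) ≤ n := n.cast_nonneg
      have h2 : (0:ℝ) < x / 2 + n := by positivity
      rw [Real.norm_eq_abs, abs_of_nonneg (by positivity)]
      exact inv_anti₀ (by positivity) (by nlinarith)
  exact hcont.continuousAt (isOpen_Ioi.mem_nhds (mem_Ioi.mpr (half_lt_self hx)))

lemma integrable_S {x : ℝ} (hx : 0 < x) : IntervalIntegrable S MeasureTheory.volume x (x + 1) := by
  refine ContinuousOn.intervalIntegrable fun t ht => ?_
  have : 0 < t := by
    rw [uIcc_of_le (by linarith)] at ht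
    linarith [ht.1]
  exact (contAt_S this).continuousWithinAt

lemma integrable_tri {x : ℝ} (hx : 0 < x) :
    IntervalIntegrable tri MeasureTheory.volume x (x + 1) := by
  refine ContinuousOn.intervalIntegrable (contOn_tri.mono fun t ht => ?_)
  rw [uIcc_of_le (by linarith)] at ht
  exact lt_of_lt_of_le hx ht.1

lemma integral_partial {x : ℝ} (hx : 0 < x) (N : ℕ) :
    (∫ t in x..(x + 1), ∑ n ∈ Finset.range N, ((t + n) ^ 2)⁻¹) = x⁻¹ - (x + N)⁻¹ := by
  have heach : ∀ n : ℕ, (∫ t in x..(x + 1), ((t + n) ^ 2)⁻¹)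
      = (x + n)⁻¹ - (x + 1 + n)⁻¹ := by
    intro n
    have hft : ∀ t ∈ uIcc x (x + 1), HasDerivAt (fun t : ℝ => -(t + n)⁻¹) ((t + n) ^ 2)⁻¹ t := by
      intro t ht
      rw [uIcc_of_le (by linarith)] at ht
      have htn : (0:ℝ) < t + n := by
        have hn : (0:ℝ) ≤ n := n.cast_nonneg
        have := ht.1
        linarith
      have h1 : HasDerivAt (fun t : ℝ => t + (n:ℝ)) 1 t := (hasDerivAt_id t).add_const _
      have h2 := (h1.inv htn.ne').neg
      exact h2.congr_deriv (by ring)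
    have hint : IntervalIntegrable (fun t : ℝ => ((t + n) ^ 2)⁻¹) MeasureTheory.volume x (x+1) := by
      refine ContinuousOn.intervalIntegrable (ContinuousOn.inv₀ (by fun_prop) fun t ht => ?_)
      rw [uIcc_of_le (by linarith)] at ht
      have hn : (0:ℝ) ≤ n := n.cast_nonneg
      have ht1 := ht.1
      have : (0:ℝ) < t + n := by linarith
      exact (pow_pos this 2).ne'
    rw [intervalIntegral.integral_eq_sub_of_hasDerivAt hft hint]
    ring
  have hswap := intervalIntegral.integral_finset_sum (a := x) (b := x + 1)
    (μ := MeasureTheory.volume) (f := fun (n : ℕ) (t : ℝ) => ((t + n) ^ 2)⁻¹)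
    (s := Finset.range N) (fun n _ => by
      refine ContinuousOn.intervalIntegrable (ContinuousOn.inv₀ (by fun_prop) fun t ht => ?_)
      rw [uIcc_of_le (by linarith)] at ht
      have hn : (0:ℝ) ≤ n := n.cast_nonneg
      have ht1 := ht.1
      have : (0:ℝ) < t + n := by linarith
      exact (pow_pos this 2).ne')
  have htel : ∀ n : ℕ, (x + n)⁻¹ - (x + 1 + n)⁻¹
      = (fun m : ℕ => (x + m)⁻¹) n - (fun m : ℕ => (x + m)⁻¹) (n + 1) := by
    intro n
    simp only
    push_cast
    ring_nf
  rw [hswap, Finset.sum_congr rfl fun n _ => heach n,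
    Finset.sum_congr rfl fun n _ => htel n,
    Finset.sum_range_sub' (fun m : ℕ => (x + m)⁻¹) N]
  norm_num


lemma contAt_phi {x : ℝ} (hx : 0 < x) : ContinuousAt (fun t => tri t - S t) x :=
  ((contOn_tri.continuousAt (isOpen_Ioi.mem_nhds hx)).sub (contAt_S hx))

lemma integrable_phi {x : ℝ} (hx : 0 < x) {a b : ℝ} (ha : x ≤ a) (hab : a ≤ b) (hb : b ≤ x + 1) :
    IntervalIntegrable (fun t => tri t - S t) volume a b := by
  have h1 : IntervalIntegrable tri volume a b :=
    (integrable_tri hx).mono_set (by rw [uIcc_of_le hab, uIcc_of_le (by linarith)]; exact Icc_subset_Icc ha hb)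
  have h2 : IntervalIntegrable S volume a b :=
    (integrable_S hx).mono_set (by rw [uIcc_of_le hab, uIcc_of_le (by linarith)]; exact Icc_subset_Icc ha hb)
  exact h1.sub h2

lemma integrable_psum {x : ℝ} (hx : 0 < x) (N : ℕ) :
    IntervalIntegrable (fun t => ∑ n ∈ Finset.range N, ((t + n) ^ 2)⁻¹) volume x (x + 1) := by
  refine ContinuousOn.intervalIntegrable ?_
  refine continuousOn_finset_sum _ fun n _ => ContinuousOn.inv₀ (by fun_prop) fun t ht => ?_
  rw [uIcc_of_le (by linarith)] at ht
  have hn : (0:ℝ) ≤ n := n.cast_nonneg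
  have ht1 := ht.1
  have : (0:ℝ) < t + n := by linarith
  exact (pow_pos this 2).ne'

lemma integral_S_ge {x : ℝ} (hx : 0 < x) (N : ℕ) :
    x⁻¹ - (x + N)⁻¹ ≤ ∫ t in x..(x + 1), S t := by
  rw [← integral_partial hx N]
  refine intervalIntegral.integral_mono_on (by linarith) (integrable_psum hx N)
    (integrable_S hx) fun t ht => ?_
  have ht0 : 0 < t := lt_of_lt_of_le hx ht.1
  exact (summable_S ht0).sum_le_tsum (Finset.range N) (fun n _ => by positivity)

lemma tri_eq_S {x : ℝ} (hx : 0 < x) : tri x = S x := by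
  by_contra hne
  have hlt : 0 < tri x - S x := lt_of_le_of_ne (sub_nonneg.mpr (S_le_tri hx)) (by
    intro h
    exact hne (by linarith [h.symm]))
  set c := tri x - S x with hc
  -- the integral of φ := tri - S over [x, x+1] is ≤ 0
  have hIphi : (∫ t in x..(x + 1), (tri t - S t)) ≤ 0 := by
    have heq : (∫ t in x..(x + 1), (tri t - S t)) = x⁻¹ - ∫ t in x..(x + 1), S t := by
      rw [intervalIntegral.integral_sub (integrable_tri hx) (integrable_S hx), integral_tri hx]
    have hten : Tendsto (fun N : ℕ => (x + N)⁻¹) atTop (𝓝 0) := by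
      apply Tendsto.inv_tendsto_atTop
      exact tendsto_atTop_add_const_left _ _ tendsto_natCast_atTop_atTop
    refine ge_of_tendsto hten ?_
    filter_upwards with N
    have := integral_S_ge hx N
    rw [heq]
    linarith
  -- but φ is continuous at x, nonneg, and φ x = c > 0
  obtain ⟨δ, hδpos, hδ⟩ : ∃ δ > 0, ∀ t ∈ Icc x (x + δ), c / 2 ≤ tri t - S t := by
    have := (contAt_phi hx).eventually (eventually_ge_nhds (show c / 2 < tri x - S x by linarith))
    rw [Metric.eventually_nhds_iff] at this
    obtain ⟨ε, hε, hball⟩ := this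
    refine ⟨min (ε / 2) 1, by positivity, fun t ht => ?_⟩
    refine hball ?_
    rw [Real.dist_eq, abs_sub_lt_iff]
    have h1 := ht.1
    have h2 := ht.2
    have h3 : min (ε / 2) 1 ≤ ε / 2 := min_le_left _ _
    constructor <;> linarith
  set δ' := min δ 1 with hδ'
  have hδ'pos : 0 < δ' := lt_min hδpos one_pos
  have hδ'le : δ' ≤ 1 := min_le_right _ _
  have h1 : (δ' * (c / 2)) ≤ ∫ t in x..(x + δ'), (tri t - S t) := by
    have := intervalIntegral.integral_mono_on (a := x) (b := x + δ')
      (f := fun _ => c / 2) (g := fun t => tri t - S t) (by linarith)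
      intervalIntegrable_const (integrable_phi hx le_rfl (by linarith) (by linarith))
      (fun t ht => hδ t ⟨ht.1, le_trans ht.2 (by simp [hδ', min_le_left])⟩)
    rw [intervalIntegral.integral_const, smul_eq_mul, add_sub_cancel_left] at this
    exact this
  have h2 : (0:ℝ) ≤ ∫ t in (x + δ')..(x + 1), (tri t - S t) := by
    refine intervalIntegral.integral_nonneg (by linarith) fun t ht => ?_
    have ht0 : 0 < t := by linarith [ht.1]
    exact sub_nonneg.mpr (S_le_tri ht0)
  have hsplit : (∫ t in x..(x + 1), (tri t - S t))
      = (∫ t in x..(x + δ'), (tri t - S t)) + ∫ t in (x + δ')..(x + 1), (tri t - S t) := by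
    rw [intervalIntegral.integral_add_adjacent_intervals
      (integrable_phi hx le_rfl (by linarith) (by linarith))
      (integrable_phi hx (by linarith) (by linarith) le_rfl)]
  have : 0 < δ' * (c / 2) := by positivity
  rw [hsplit] at hIphi
  linarith


noncomputable def Faux (t : ℝ) : ℝ :=
  t⁻¹ - (t + 1/2)⁻¹ + (2*t^2)⁻¹ - (2*(t + 1/2)^2)⁻¹ + (6*t^3)⁻¹ - (6*(t + 1/2)^3)⁻¹ + (8*t^4)⁻¹

lemma Faux_nonneg {t : ℝ} (ht : 0 < t) : 0 ≤ Faux t := by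
  have key : Faux t = (1/64 + 11/96*t + 3/8*t^2 + 7/8*t^3 + t^4 + 1/2*t^5)
      / (t^4 * (t + 1/2)^3) := by
    have h1 : t ≠ 0 := ht.ne'
    have h2 : t + 1/2 ≠ 0 := by positivity
    rw [Faux]
    field_simp
    ring
  rw [key]
  have h0 : (0:ℝ) ≤ t := ht.le
  refine div_nonneg (by positivity) (by positivity)

lemma Faux_step {t : ℝ} (ht : 0 < t) :
    (t^2)⁻¹ - ((t + 1/2)^2)⁻¹ ≤ Faux t - Faux (t + 1) := by
  rw [← sub_nonneg]
  have h1 : t ≠ 0 := ht.ne'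
  have h2 : t + 1/2 ≠ 0 := by positivity
  have h3 : t + 1 ≠ 0 := by positivity
  have h4 : t + 3/2 ≠ 0 := by positivity
  have key : Faux t - Faux (t + 1) - ((t^2)⁻¹ - ((t + 1/2)^2)⁻¹)
      = (27/512 + 45/64*t + 1017/256*t^2 + 1607/128*t^3 + 4691/192*t^4 + 2929/96*t^5
          + 395/16*t^6 + 101/8*t^7 + 15/4*t^8 + 1/2*t^9)
        / (t^4 * (t + 1/2)^3 * (t + 1)^4 * (t + 3/2)^3) := by
    have h5 : t + 1 + 1/2 = t + 3/2 := by ring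
    rw [Faux, Faux, h5]
    field_simp
    ring
  rw [key]
  have h0 : (0:ℝ) ≤ t := ht.le
  refine div_nonneg (by positivity) (by positivity)


lemma S_diff_le {x : ℝ} (hx : 0 < x) : S x - S (x + 1/2) ≤ Faux x := by
  have hy : 0 < x + 1/2 := by linarith
  have hdiff : S x - S (x + 1/2)
      = ∑' n : ℕ, (((x + n) ^ 2)⁻¹ - ((x + 1/2 + n) ^ 2)⁻¹) := by
    rw [S, S, ← (summable_S hx).tsum_sub (summable_S hy)]
  rw [hdiff]
  have hpart : ∀ N : ℕ, (∑ n ∈ Finset.range N, (((x + n) ^ 2)⁻¹ - ((x + 1/2 + n) ^ 2)⁻¹))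
      + Faux (x + N) ≤ Faux x := by
    intro N
    induction N with
    | zero => simp
    | succ N ih =>
      have hxN : 0 < x + N := by positivity
      have hstep := Faux_step hxN
      have hcast : x + (N + 1 : ℕ) = (x + N) + 1 := by push_cast; ring
      rw [Finset.sum_range_succ, hcast]
      have : ((x + N) ^ 2)⁻¹ - ((x + N + 1/2) ^ 2)⁻¹ + Faux ((x + N) + 1) ≤ Faux (x + N) := by
        linarith
      have h2 : x + 1/2 + N = x + N + 1/2 := by ring
      rw [h2]
      linarith
  refine tsum_le_of_sum_range_le (fun n => ?_) fun N => ?_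
  · have h1 : (0:ℝ) < x + n := by positivity
    have h2 : x + n ≤ x + 1/2 + n := by linarith
    have := inv_anti₀ (by positivity : (0:ℝ) < (x+n)^2) (by nlinarith : (x+n)^2 ≤ (x+1/2+n)^2)
    linarith
  · have h1 := hpart N
    have h2 : 0 ≤ Faux (x + N) := Faux_nonneg (by positivity)
    linarith


end StudentTAux

open StudentTAux in
/-- `h(θ) = O(θ^(−4))` as `θ → ∞`: there are `C > 0` and `T > 0` with `h(θ) ≤ C θ^(−4)`
for all `θ ≥ T`. -/
theorem student_t_fisher_asymptotics :
    ∃ C > (0 : ℝ), ∃ T > (0 : ℝ), ∀ θ ≥ T, studentTFisher θ ≤ C / θ ^ 4 := by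
  refine ⟨4, by norm_num, 1, by norm_num, fun θ hθ => ?_⟩
  have hθ0 : (0:ℝ) < θ := by linarith
  have hx : 0 < θ / 2 := by linarith
  have h1 : trigamma (θ / 2) = S (θ / 2) := tri_eq_S hx
  have h2 : trigamma ((θ + 1) / 2) = S (θ / 2 + 1/2) := by
    rw [show (θ + 1) / 2 = θ / 2 + 1/2 by ring]
    exact tri_eq_S (by linarith)
  have h3 := S_diff_le hx
  have key : 4 / θ^4 - ((1/4) * Faux (θ/2) - 1/(2*θ) - (θ+2)/(2*θ*(θ+3)) + 1/(θ+1))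
      = (21/2 + 34*θ + 223/6*θ^2 + 13*θ^3) / (θ^4 * (θ+1)^3 * (θ+3)) := by
    have e1 : θ ≠ 0 := hθ0.ne'
    have e2 : θ + 1 ≠ 0 := by positivity
    have e3 : θ + 3 ≠ 0 := by positivity
    have e4 : θ / 2 ≠ 0 := by positivity
    have e5 : θ / 2 + 1/2 ≠ 0 := by positivity
    rw [Faux]
    field_simp
    ring
  have hnn : (0:ℝ) ≤ (21/2 + 34*θ + 223/6*θ^2 + 13*θ^3) / (θ^4 * (θ+1)^3 * (θ+3)) := by
    have h0 : (0:ℝ) ≤ θ := hθ0.le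
    positivity
  rw [studentTFisher, h1, h2]
  linarith [hnn, key, h3]
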